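/- arXiv:2112.06834 — 3 statements merged into one kernel-verified Lean document; each statement's English description precedes it below -/
import Mathlib

section
/- Let {X_ℓ, F_ℓ}_{ℓ≥0} be an inverse sequence of compact metric spaces X_ℓ and upper semicontinuous set-valued functions F_ℓ : X_{ℓ+1} ⊸ X_ℓ (for ℓ ≥ 0), and let g_ℓ : X_{ℓ+1} → X_ℓ (for ℓ ≥ 1) be continuous single-valued functions such that for each positive integer ℓ and each x ∈ X_{ℓ+2}, g_ℓ(F_{ℓ+1}(x)) ⊆ F_ℓ(g_{ℓ+1}(x)). If there is an upper semicontinuous set-valued function G_0 : X_1 ⊸ X_0 such that (1) G_0(F_1(x)) ⊆ F_0(g_1(x)) for every x ∈ X_2, and (2) G_0(x) ⊄ F_0(x) for every x ∈ X_1, then the inverse limit lim⊸{X_ℓ, F_ℓ}_{ℓ≥1} does not have the fixed point property. -/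
open Metric Filter Set Function

/-- The inverse limit of an inverse sequence `{X n, f n}` of spaces with
single-valued bonding maps `f n : X (n+1) → X n`. -/
def invLim (X : ℕ → Type*) (f : ∀ n, X (n + 1) → X n) : Set (∀ n, X n) :=
  {x | ∀ n, x n = f n (x (n + 1))}

/-- The inverse limit of an inverse sequence `{X n, F n}` of spaces with
set-valued bonding functions `F n : X (n+1) ⊸ X n`. -/
def invLimSV (X : ℕ → Type*) (F : ∀ n, X (n + 1) → Set (X n)) : Set (∀ n, X n) :=
  {x | ∀ n, x n ∈ F n (x (n + 1))}

/-- A set-valued function is upper semicontinuous (with nonempty closed values):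
all of its values are nonempty closed sets and its graph is closed. -/
def IsUSC {A B : Type*} [TopologicalSpace A] [TopologicalSpace B] (F : A → Set B) : Prop :=
  (∀ a, (F a).Nonempty) ∧ (∀ a, IsClosed (F a)) ∧ IsClosed {p : A × B | p.2 ∈ F p.1}

/-- The Mahavier product `⋆_{i=0}^{n-1} Γ(F_i⁻¹)`: all tuples `(x_0, …, x_n)`
with `x_i ∈ F i (x_{i+1})` for all `i < n`. -/
def mahavier (X : ℕ → Type*) (F : ∀ n, X (n + 1) → Set (X n)) (n : ℕ) :
    Set (∀ i : Fin (n + 1), X i.1) :=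
  {x | ∀ i : Fin n,
    x ⟨i.1, Nat.lt_succ_of_lt i.2⟩ ∈ F i.1 (x ⟨i.1 + 1, Nat.succ_lt_succ i.2⟩)}

/-- A space has the fixed point property if every continuous self-map has a fixed point. -/
def HasFPP (Z : Type*) [TopologicalSpace Z] : Prop :=
  ∀ g : Z → Z, Continuous g → ∃ p, g p = p

theorem stmt17
    {X : ℕ → Type*} [∀ n, MetricSpace (X n)] [∀ n, CompactSpace (X n)]
    (F : ∀ n, X (n + 1) → Set (X n)) (hF : ∀ n, IsUSC (F n))
    (g : ∀ n : ℕ, X (n + 2) → X (n + 1)) (hgc : ∀ n, Continuous (g n))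
    (hcomm : ∀ n : ℕ, ∀ x : X (n + 3), g n '' F (n + 2) x ⊆ F (n + 1) (g (n + 1) x))
    (G0 : X 1 → Set (X 0)) (hG0 : IsUSC G0)
    (h1 : ∀ x : X 2, (⋃ a ∈ F 1 x, G0 a) ⊆ F 0 (g 0 x))
    (h2 : ∀ x : X 1, ¬ G0 x ⊆ F 0 x) :
    ¬ HasFPP ↥(invLimSV (fun n => X (n + 1)) (fun n => F (n + 1))) := by
  intro hfpp
  have hmem : ∀ x : ↥(invLimSV (fun n => X (n + 1)) (fun n => F (n + 1))),
      (fun n => g n (x.1 (n + 1))) ∈ invLimSV (fun n => X (n + 1)) (fun n => F (n + 1)) := by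
    intro x n
    exact hcomm n (x.1 (n + 2)) ⟨x.1 (n + 1), x.2 (n + 1), rfl⟩
  set h : ↥(invLimSV (fun n => X (n + 1)) (fun n => F (n + 1))) →
      ↥(invLimSV (fun n => X (n + 1)) (fun n => F (n + 1))) :=
    fun x => ⟨fun n => g n (x.1 (n + 1)), hmem x⟩ with hh
  have hc : Continuous h := by
    apply Continuous.subtype_mk
    exact continuous_pi fun n =>
      (hgc n).comp ((continuous_apply (n + 1)).comp continuous_subtype_val)
  obtain ⟨p, hp⟩ := hfpp h hc
  have hpn : ∀ n, g n (p.1 (n + 1)) = p.1 n := fun n => congrFun (congrArg Subtype.val hp) n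
  apply h2 (p.1 0)
  have hsub : G0 (p.1 0) ⊆ ⋃ a ∈ F 1 (p.1 1), G0 a :=
    Set.subset_biUnion_of_mem (p.2 0)
  refine fun y hy => ?_
  have hmem2 := h1 (p.1 1) (hsub hy)
  rwa [hpn 0] at hmem2
end

section
/- Let {X_ℓ, f_ℓ}_{ℓ≥0} be an inverse sequence of compact metric spaces X_ℓ and continuous functions f_ℓ : X_{ℓ+1} → X_ℓ, and let g_ℓ : X_{ℓ+1} → X_ℓ (for ℓ ≥ 0) be continuous functions such that for each non-negative integer ℓ and each x ∈ X_{ℓ+2}, g_ℓ(f_{ℓ+1}(x)) = f_ℓ(g_{ℓ+1}(x)). If g_0(x) ≠ f_0(x) for all x ∈ X_1, then the inverse limit varprojlim{X_ℓ, f_ℓ}_{ℓ≥1} does not have the fixed point property. -/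
open Metric Filter Set Function

theorem stmt18
    {X : ℕ → Type*} [∀ n, MetricSpace (X n)] [∀ n, CompactSpace (X n)]
    (f : ∀ n, X (n + 1) → X n) (hf : ∀ n, Continuous (f n))
    (g : ∀ n, X (n + 1) → X n) (hg : ∀ n, Continuous (g n))
    (hcomm : ∀ n : ℕ, ∀ x : X (n + 2), g n (f (n + 1) x) = f n (g (n + 1) x))
    (hne : ∀ x : X 1, g 0 x ≠ f 0 x) :
    ¬ HasFPP ↥(invLim (fun n => X (n + 1)) (fun n => f (n + 1))) := by
  intro hfpp
  set L := invLim (fun n => X (n + 1)) (fun n => f (n + 1)) with hL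
  have hmem : ∀ x : L, (fun n => g (n + 1) (x.1 (n + 1))) ∈ L := by
    intro x n
    have h1 : x.1 (n + 1) = f (n + 2) (x.1 (n + 2)) := x.2 (n + 1)
    calc g (n + 1) (x.1 (n + 1)) = g (n + 1) (f (n + 2) (x.1 (n + 2))) := by rw [h1]
      _ = f (n + 1) (g (n + 2) (x.1 (n + 2))) := hcomm (n + 1) _
  obtain ⟨p, hp⟩ := hfpp (fun x => ⟨fun n => g (n + 1) (x.1 (n + 1)), hmem x⟩)
    (by
      refine Continuous.subtype_mk ?_ _
      exact continuous_pi fun n =>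
        (hg (n + 1)).comp ((continuous_apply (n + 1)).comp continuous_subtype_val))
  have hcoord : ∀ n, g (n + 1) (p.1 (n + 1)) = p.1 n := fun n =>
    congrFun (congrArg Subtype.val hp) n
  have h0 : g 1 (p.1 1) = p.1 0 := hcoord 0
  have hf0 : f 1 (p.1 1) = p.1 0 := (p.2 0).symm
  have := hcomm 0 (p.1 1)
  rw [hf0, h0] at this
  exact hne (p.1 0) this
end

section
/- Let {X_ℓ, F_ℓ} be an inverse sequence of compact metric spaces X_ℓ with upper semicontinuous set-valued bonding functions F_ℓ : X_{ℓ+1} ⊸ X_ℓ, and let (h_ℓ) be a sequence of continuous single-valued functions h_ℓ : ⋆_{i=1}^{ℓ+1}Γ(F_i⁻¹) → ⋆_{i=1}^{ℓ}Γ(F_i⁻¹) such that (1) h_1(x_1, x_2, x_3) ≠ (x_1, x_2) for each (x_1, x_2, x_3) ∈ ⋆_{i=1}^{2}Γ(F_i⁻¹), and (2) for each positive integer k and each (x_1, …, x_{k+3}) ∈ ⋆_{i=1}^{k+2}Γ(F_i⁻¹), if h_{k+1}(x_1, …, x_{k+3}) = (z_1, …, z_{k+2}), then h_k(x_1, …,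 x_{k+2}) = (z_1, …, z_{k+1}). Then the inverse limit lim⊸{X_ℓ, F_ℓ} does not have the fixed point property. -/
open Metric Filter Set Function

theorem stmt19
    {X : ℕ → Type*} [∀ n, MetricSpace (X n)] [∀ n, CompactSpace (X n)]
    (F : ∀ n, X (n + 1) → Set (X n)) (hF : ∀ n, IsUSC (F n))
    -- `h k` represents the continuous map `h_{k+1} : ⋆_{i=1}^{k+2}Γ(F_i⁻¹) → ⋆_{i=1}^{k+1}Γ(F_i⁻¹)`
    (h : ∀ k : ℕ, (∀ i : Fin (k + 3), X i.1) → (∀ i : Fin (k + 2), X i.1))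
    (hcont : ∀ k, ContinuousOn (h k) (mahavier X F (k + 2)))
    (hmaps : ∀ k, MapsTo (h k) (mahavier X F (k + 2)) (mahavier X F (k + 1)))
    -- (1)
    (h1 : ∀ x ∈ mahavier X F 2,
      h 0 x ≠ fun i : Fin 2 => x ⟨i.1, lt_of_lt_of_le i.2 (by omega)⟩)
    -- (2)
    (h2 : ∀ j : ℕ, ∀ x ∈ mahavier X F (j + 3),
      (fun i : Fin (j + 2) => h (j + 1) x ⟨i.1, lt_of_lt_of_le i.2 (by omega)⟩) =
        h j (fun i : Fin (j + 3) => x ⟨i.1, lt_of_lt_of_le i.2 (by omega)⟩)) :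
    ¬ HasFPP ↥(invLimSV X F) := by
  intro hfpp
  -- truncations of inverse-limit points lie in the Mahavier products
  have trunc_mem : ∀ x : ∀ n, X n, x ∈ invLimSV X F → ∀ m : ℕ,
      (fun i : Fin (m + 1) => x i.1) ∈ mahavier X F m := by
    intro x hx m i
    exact hx i.1
  -- compatibility of the h's on truncations
  have hstep : ∀ x : ∀ n, X n, x ∈ invLimSV X F → ∀ n : ℕ, ∀ i : Fin (n + 2),
      h (n + 1) (fun j : Fin (n + 4) => x j.1) ⟨i.1, by omega⟩ =
      h n (fun j : Fin (n + 3) => x j.1) ⟨i.1, by omega⟩ := by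
    intro x hx n i
    have H := h2 n (fun j : Fin (n + 4) => x j.1) (trunc_mem x hx (n + 3))
    exact congrFun H i
  -- the candidate map (raw version)
  set g0 : (↥(invLimSV X F)) → ∀ n, X n :=
    fun x n => h n (fun j : Fin (n + 3) => x.1 j.1) ⟨n, by omega⟩ with hg0
  have g0_mem : ∀ x, g0 x ∈ invLimSV X F := by
    intro x n
    have hm := hmaps (n + 1) (trunc_mem x.1 x.2 (n + 3))
    have key := hm ⟨n, by omega⟩
    have e1 : h (n + 1) (fun j : Fin (n + 4) => x.1 j.1) ⟨n, by omega⟩ =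
        h n (fun j : Fin (n + 3) => x.1 j.1) ⟨n, by omega⟩ := hstep x.1 x.2 n ⟨n, by omega⟩
    show h n (fun j : Fin (n + 3) => x.1 j.1) ⟨n, by omega⟩ ∈
      F n (h (n + 1) (fun j : Fin (n + 4) => x.1 j.1) ⟨n + 1, by omega⟩)
    rw [← e1]
    exact key
  set g : (↥(invLimSV X F)) → (↥(invLimSV X F)) := fun x => ⟨g0 x, g0_mem x⟩ with hg
  have gcont : Continuous g := by
    apply Continuous.subtype_mk
    apply continuous_pi
    intro n
    have htr : Continuous (fun x : ↥(invLimSV X F) => (fun j : Fin (n + 3) => x.1 j.1)) := by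
      apply continuous_pi
      intro j
      exact (continuous_apply j.1).comp continuous_subtype_val
    have : Continuous (fun x : ↥(invLimSV X F) => h n (fun j : Fin (n + 3) => x.1 j.1)) :=
      (hcont n).comp_continuous htr (fun x => trunc_mem x.1 x.2 (n + 2))
    exact (continuous_apply (⟨n, by omega⟩ : Fin (n + 2))).comp this
  obtain ⟨p, hp⟩ := hfpp g gcont
  have hpv : ∀ n, g0 p n = p.1 n := by
    intro n
    exact congrFun (congrArg Subtype.val hp) n
  apply h1 (fun j : Fin 3 => p.1 j.1) (trunc_mem p.1 p.2 2)
  funext i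
  match i with
  | ⟨0, _⟩ => exact hpv 0
  | ⟨1, _⟩ =>
    have e : h 1 (fun j : Fin 4 => p.1 j.1) ⟨1, by omega⟩ =
        h 0 (fun j : Fin 3 => p.1 j.1) ⟨1, by omega⟩ := hstep p.1 p.2 0 ⟨1, by omega⟩
    rw [← e]
    exact hpv 1
end
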